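/- arXiv:1607.04852 — 2 statements merged into one kernel-verified Lean document; each statement's English description precedes it below -/
import Mathlib

section
/- Let K be a field of characteristic 0, π ∈ K^×, p an odd or even prime fixed, and α_1,…,α_m, β_1,…,β_n ∈ K. In the localized Weyl algebra B = K⟨x, x^{-1}, ∂⟩, let ι be the K-algebra automorphism determined by ι(x) = x^{-1}, ι(∂) = -x^2∂ (the inversion substitution). Then ι(Hyp_π(α;β)) = u · Hyp_{(-1)^p π}(-β; -α) for a unit u ∈ B, where Hyp_π(α;β) = ∏_{i=1}^m(x∂-α_i) - (-1)^{m+np} π^{m-n} x ∏_{j=1}^n(x∂-β_j), and -α, -β denote the sequences of negated parameters. In particular the left ideals B·ι(Hyp_π(α;β)) and B·Hyp_{(-1)^p π}(-β;-α) coincide. -/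
lemma map_neg_prod {B : Type*} [Ring B] (l : List B) :
    (l.map (fun y => -y)).prod = (-1 : B) ^ l.length * l.prod := by
  induction l with
  | nil => simp
  | cons a l ih =>
    simp only [List.map_cons, List.prod_cons, List.length_cons, ih, pow_succ]
    have h : Commute ((-1:B)^l.length) (-a) := ((Commute.neg_one_left a).pow_left _).neg_right
    calc -a * ((-1:B)^l.length * l.prod)
        = (-a * (-1)^l.length) * l.prod := by rw [mul_assoc]
      _ = ((-1:B)^l.length * -a) * l.prod := by rw [← h.eq]
      _ = (-1:B)^l.length * (-1 * (a * l.prod)) := by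
            rw [mul_assoc, neg_one_mul, neg_mul]
      _ = (-1:B)^l.length * -1 * (a * l.prod) := by rw [mul_assoc]

lemma ofFn_neg_prod {B : Type*} [Ring B] {k : ℕ} (f : Fin k → B) :
    (List.ofFn fun i => -(f i)).prod = (-1:B)^k * (List.ofFn f).prod := by
  have h : (List.ofFn fun i => -(f i)) = (List.ofFn f).map (fun y => -y) := by
    rw [List.map_ofFn]; rfl
  rw [h, map_neg_prod, List.length_ofFn]

lemma span_unit_mul {B : Type*} [Ring B] (u : Bˣ) (a : B) :
    Ideal.span {(u : B) * a} = Ideal.span {a} := by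
  apply le_antisymm
  · rw [Ideal.span_le, Set.singleton_subset_iff]
    exact Ideal.mul_mem_left _ _ (Ideal.subset_span rfl)
  · rw [Ideal.span_le, Set.singleton_subset_iff]
    have h := Ideal.mul_mem_left (Ideal.span {(u:B) * a}) (↑u⁻¹ : B)
      (Ideal.subset_span rfl)
    rwa [← mul_assoc, Units.inv_mul, one_mul] at h

/-- The hypergeometric operator `∏ᵢ(x∂-αᵢ) - c·x·∏ⱼ(x∂-βⱼ)`. -/
noncomputable def hypOp {K A : Type*} [Field K] [Ring A] [Algebra K A]
    (x d : A) {m n : ℕ} (α : Fin m → K) (β : Fin n → K) (c : K) : A :=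
  (List.ofFn fun i : Fin m => x * d - algebraMap K A (α i)).prod
    - algebraMap K A c * x * (List.ofFn fun j : Fin n => x * d - algebraMap K A (β j)).prod

/-- Lemma 3.3(i) of the paper: in the localized Weyl algebra `B = K⟨x,x⁻¹,∂⟩`, the
inversion substitution `ι` (with `ι(x) = x⁻¹`, `ι(∂) = -x²∂`) sends `Hyp_π(α;β)` to a
unit multiple of `Hyp_{(-1)^p π}(-β;-α)`; in particular the two left ideals coincide. -/
theorem inv_hypOp {K : Type*} [Field K] [CharZero K] (p : ℕ) (hp : p.Prime)
    (B : Type*) [Ring B] [Algebra K B] (x xinv d : B)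
    (hrel : d * x = x * d + 1) (hx1 : x * xinv = 1) (hx2 : xinv * x = 1)
    (ι : B ≃ₐ[K] B) (hιx : ι x = xinv) (hιd : ι d = -(x ^ 2 * d))
    {m n : ℕ} (α : Fin m → K) (β : Fin n → K) (π : K) (hπ : π ≠ 0) :
    (∃ u : Bˣ,
      ι (hypOp x d α β ((-1 : K) ^ (m + n * p) * π ^ ((m : ℤ) - (n : ℤ))))
        = (u : B) * hypOp x d (fun j => -β j) (fun i => -α i)
            ((-1 : K) ^ (n + m * p) * ((-1 : K) ^ p * π) ^ ((n : ℤ) - (m : ℤ))))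
    ∧ Ideal.span {ι (hypOp x d α β ((-1 : K) ^ (m + n * p) * π ^ ((m : ℤ) - (n : ℤ))))}
        = Ideal.span {hypOp x d (fun j => -β j) (fun i => -α i)
            ((-1 : K) ^ (n + m * p) * ((-1 : K) ^ p * π) ^ ((n : ℤ) - (m : ℤ)))} := by
  set c : K := (-1 : K) ^ (m + n * p) * π ^ ((m : ℤ) - (n : ℤ)) with hcdef
  set c' : K := (-1 : K) ^ (n + m * p) * ((-1 : K) ^ p * π) ^ ((n : ℤ) - (m : ℤ)) with hc'def
  set s : K := -((-1 : K) ^ n * c) with hsdef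
  have hne1 : (-1 : K) ≠ 0 := neg_ne_zero.mpr one_ne_zero
  have hc0 : c ≠ 0 := mul_ne_zero (pow_ne_zero _ hne1) (zpow_ne_zero _ hπ)
  have hs0 : s ≠ 0 := neg_ne_zero.mpr (mul_ne_zero (pow_ne_zero _ hne1) hc0)
  -- the scalar identity s * c' = -(-1)^m
  have hsc' : s * c' = -(-1 : K) ^ m := by
    have hεne : ((-1 : K) ^ p) ≠ 0 := pow_ne_zero _ hne1
    have hε : ((-1 : K) ^ p) ^ ((n : ℤ) - (m : ℤ)) = (-1 : K) ^ (p * (n + m)) := by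
      have h2 : ((-1 : K) ^ p) ^ m * ((-1 : K) ^ p) ^ m = 1 := by
        rw [← pow_add, ← pow_mul, show p * (m + m) = 2 * (p * m) by ring, pow_mul,
          neg_one_sq, one_pow]
      rw [zpow_sub₀ hεne, zpow_natCast, zpow_natCast, div_eq_mul_inv, inv_eq_of_mul_eq_one_left h2,
        ← pow_add, ← pow_mul]
    have hπ2 : π ^ ((m : ℤ) - (n : ℤ)) * π ^ ((n : ℤ) - (m : ℤ)) = 1 := by
      rw [← zpow_add₀ hπ, show ((m : ℤ) - n) + ((n : ℤ) - m) = 0 by ring, zpow_zero]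
    rw [hsdef, hc'def, hcdef, mul_zpow, hε]
    calc -((-1:K)^n * ((-1:K)^(m+n*p) * π ^ ((m:ℤ)-(n:ℤ)))) *
          ((-1:K)^(n+m*p) * ((-1:K)^(p*(n+m)) * π ^ ((n:ℤ)-(m:ℤ))))
        = -(((-1:K)^n * (-1:K)^(m+n*p) * (-1:K)^(n+m*p) * (-1:K)^(p*(n+m)))
            * (π ^ ((m:ℤ)-(n:ℤ)) * π ^ ((n:ℤ)-(m:ℤ)))) := by ring
      _ = -((-1:K)^(n + (m+n*p) + (n+m*p) + p*(n+m)) * 1) := by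
            rw [hπ2, ← pow_add, ← pow_add, ← pow_add]
      _ = -(-1:K)^m := by
            rw [mul_one, show n + (m+n*p) + (n+m*p) + p*(n+m)
              = m + 2*(n + n*p + m*p) by ring, pow_add, pow_mul, neg_one_sq, one_pow,
              mul_one]
  -- iota on x*d
  have hθ : ι (x * d) = -(x * d) := by
    rw [map_mul, hιx, hιd, mul_neg, sq, mul_assoc, ← mul_assoc xinv, hx2, one_mul]
  have hfac : ∀ a : K, ι (x * d - algebraMap K B a) = -(x * d + algebraMap K B a) := by
    intro a
    rw [map_sub, hθ, AlgEquiv.commutes]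
    abel
  have hprod : ∀ (k : ℕ) (γ : Fin k → K),
      ι (List.ofFn fun i => x * d - algebraMap K B (γ i)).prod
        = ((-1 : K) ^ k) • (List.ofFn fun i => x * d + algebraMap K B (γ i)).prod := by
    intro k γ
    rw [map_list_prod, List.map_ofFn]
    have h : (⇑ι ∘ fun i => x * d - algebraMap K B (γ i))
        = fun i => -(x * d + algebraMap K B (γ i)) := by
      funext i; exact hfac (γ i)
    rw [h, ofFn_neg_prod, Algebra.smul_def, map_pow, map_neg, map_one]
  have hxx : ∀ z : B, xinv * (x * z) = z := fun z => by rw [← mul_assoc, hx2, one_mul]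
  have hv1 : algebraMap K B s * xinv * (x * algebraMap K B s⁻¹) = 1 := by
    rw [mul_assoc, ← mul_assoc xinv, hx2, one_mul, ← map_mul,
      mul_inv_cancel₀ hs0, map_one]
  have hv2 : x * algebraMap K B s⁻¹ * (algebraMap K B s * xinv) = 1 := by
    rw [mul_assoc, ← mul_assoc (algebraMap K B s⁻¹), ← map_mul,
      inv_mul_cancel₀ hs0, map_one, one_mul, hx1]
  let u : Bˣ := ⟨algebraMap K B s * xinv, x * algebraMap K B s⁻¹, hv1, hv2⟩
  have habs : ∀ P Q : B, ((-1:K)^m) • P - algebraMap K B c * xinv * (((-1:K)^n) • Q)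
      = algebraMap K B s * xinv * (Q - algebraMap K B c' * x * P) := by
    intro P Q
    rw [mul_sub]
    have h1 : algebraMap K B c * xinv * (((-1:K)^n) • Q) = ((-1:K)^n * c) • (xinv * Q) := by
      rw [mul_assoc, ← Algebra.smul_def, mul_smul_comm, smul_smul, mul_comm c]
    have h2 : algebraMap K B s * xinv * (algebraMap K B c' * x * P) = (s * c') • P := by
      rw [mul_assoc, ← Algebra.smul_def, mul_assoc (algebraMap K B c'), ← Algebra.smul_def,
        mul_smul_comm, smul_smul, hxx]
    have h3 : algebraMap K B s * xinv * Q = s • (xinv * Q) := by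
      rw [mul_assoc, ← Algebra.smul_def]
    rw [h1, h2, h3, hsc', hsdef]
    module
  have hmain : ι (hypOp x d α β c)
      = (u : B) * hypOp x d (fun j => -β j) (fun i => -α i) c' := by
    show ι (hypOp x d α β c)
        = (algebraMap K B s * xinv) * hypOp x d (fun j => -β j) (fun i => -α i) c'
    simp only [hypOp, map_neg, sub_neg_eq_add]
    rw [map_sub, map_mul, map_mul, AlgEquiv.commutes, hιx, hprod m α, hprod n β]
    exact habs _ _
  exact ⟨⟨u, hmain⟩, by rw [hmain]; exact span_unit_mul u _⟩
end

section
/- Let K be a field of characteristic 0, and let Hyp = ∏_{i=1}^m(x∂-α_i) - c·x·∏_{j=1}^n(x∂-β_j) ∈ A_1(K) with c ≠ 0 and with no α_i an integer and α_i - β_j never an integer. Then right multiplication by Hyp on the quotient A_1(K)/x·A_1(K) is bijective. -/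
/-- The Weyl relation on the free algebra on two generators `x = ι false`, `∂ = ι true`:
`∂x = x∂ + 1`. -/
inductive WeylRel (K : Type*) [Field K] :
    FreeAlgebra K Bool → FreeAlgebra K Bool → Prop
  | comm : WeylRel K (FreeAlgebra.ι K true * FreeAlgebra.ι K false)
      (FreeAlgebra.ι K false * FreeAlgebra.ι K true + 1)

/-- The Weyl algebra `A₁(K) = K⟨x,∂⟩/(∂x - x∂ - 1)`. -/
abbrev WeylAlgebra (K : Type*) [Field K] := RingQuot (WeylRel K)

/-- The generator `x` of the Weyl algebra. -/
noncomputable def wX (K : Type*) [Field K] : WeylAlgebra K :=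
  RingQuot.mkAlgHom K (WeylRel K) (FreeAlgebra.ι K false)

/-- The generator `∂` of the Weyl algebra. -/
noncomputable def wD (K : Type*) [Field K] : WeylAlgebra K :=
  RingQuot.mkAlgHom K (WeylRel K) (FreeAlgebra.ι K true)

/-- The right ideal `x·A₁(K)`, i.e. the span of `{x}` over `A₁(K)ᵐᵒᵖ`. -/
noncomputable def xWeyl (K : Type*) [Field K] :
    Submodule (WeylAlgebra K)ᵐᵒᵖ (WeylAlgebra K) :=
  Submodule.span (WeylAlgebra K)ᵐᵒᵖ {wX K}

section WeylAux
open Polynomial MulOpposite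
variable {K : Type*} [Field K]

/-- multiplication by X on K[X] -/
noncomputable def Tm : Module.End K (Polynomial K) := LinearMap.mulLeft K Polynomial.X

noncomputable def rho0 : FreeAlgebra K Bool →ₐ[K] (Module.End K (Polynomial K))ᵐᵒᵖ :=
  FreeAlgebra.lift K fun b => if b then op Tm else op (derivative : K[X] →ₗ[K] K[X])

lemma rho0_rel : ∀ ⦃x y : FreeAlgebra K Bool⦄, WeylRel K x y → rho0 x = rho0 y := by
  rintro _ _ ⟨⟩
  simp only [map_mul, map_add, map_one, rho0, FreeAlgebra.lift_ι_apply]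
  simp only [Bool.false_eq_true, if_true, if_false, ← op_mul, ← op_one, ← op_add]
  rw [op_inj]
  refine LinearMap.ext fun p => ?_
  simp [Tm, Module.End.mul_apply, LinearMap.mulLeft_apply, derivative_mul]
  ring

noncomputable def rho : WeylAlgebra K →ₐ[K] (Module.End K (Polynomial K))ᵐᵒᵖ :=
  RingQuot.liftAlgHom K ⟨rho0, rho0_rel⟩

lemma rho_x : rho (wX K) = op (derivative : K[X] →ₗ[K] K[X]) := by
  rw [wX, rho, RingQuot.liftAlgHom_mkAlgHom_apply, rho0, FreeAlgebra.lift_ι_apply]; simp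

lemma rho_d : rho (wD K) = op Tm := by
  rw [wD, rho, RingQuot.liftAlgHom_mkAlgHom_apply, rho0, FreeAlgebra.lift_ι_apply]; simp

noncomputable def phi : WeylAlgebra K →ₗ[K] Polynomial K where
  toFun P := (rho P).unop 1
  map_add' a b := by simp
  map_smul' r a := by simp

lemma phi_mul (P Q : WeylAlgebra K) : phi (P * Q) = (rho Q).unop (phi P) := by
  simp [phi, Module.End.mul_apply]

lemma phi_x_mul (Q : WeylAlgebra K) : phi (wX K * Q) = 0 := by
  rw [phi_mul]
  have : phi (wX K) = 0 := by simp [phi, rho_x]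
  rw [this, map_zero]

lemma phi_d_pow (l : ℕ) : phi ((wD K) ^ l) = Polynomial.X ^ l := by
  induction l with
  | zero => simp [phi]
  | succ l ih =>
    rw [pow_succ, phi_mul, rho_d, unop_op, ih]
    simp [Tm, LinearMap.mulLeft_apply, pow_succ, mul_comm]

lemma x_mul_mem (a : WeylAlgebra K) : wX K * a ∈ xWeyl K := by
  have : wX K * a = op a • wX K := rfl
  rw [this]
  exact Submodule.smul_mem _ _ (Submodule.mem_span_singleton_self _)

lemma phi_xWeyl {a : WeylAlgebra K} (h : a ∈ xWeyl K) : phi a = 0 := by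
  rw [xWeyl, Submodule.mem_span_singleton] at h
  obtain ⟨r, rfl⟩ := h
  rw [← MulOpposite.op_unop r, op_smul_eq_mul]
  exact phi_x_mul _

lemma dx_comm : wD K * wX K = wX K * wD K + 1 := by
  have := RingQuot.mkAlgHom_rel K (WeylRel.comm (K := K))
  simpa [map_mul, map_add, map_one, wX, wD] using this

lemma dpow_x (l : ℕ) : wD K ^ l * wX K = wX K * wD K ^ l + (l : K) • wD K ^ (l - 1) := by
  induction l with
  | zero => simp
  | succ l ih =>
    rw [pow_succ, mul_assoc, dx_comm, mul_add, mul_one, ← mul_assoc, ih]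
    rw [add_mul, smul_mul_assoc, ← pow_succ]
    have h2 : ((l:K)) • wD K ^ (l - 1 + 1) + wD K ^ l = ((l+1 : ℕ) : K) • wD K ^ (l + 1 - 1) := by
      cases l with
      | zero => simp
      | succ k =>
        simp only [Nat.succ_sub_one, Nat.add_sub_cancel]
        push_cast
        simp [add_smul]
    rw [add_assoc, h2, mul_assoc]

/-- The submodule `x·A₁ + span{∂^l}`. -/
noncomputable def NN (K : Type*) [Field K] : Submodule K (WeylAlgebra K) :=
  (xWeyl K).restrictScalars K ⊔ Submodule.span K (Set.range fun l : ℕ => wD K ^ l)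

lemma dpow_mem (l : ℕ) : wD K ^ l ∈ NN K :=
  Submodule.mem_sup_right (Submodule.subset_span ⟨l, rfl⟩)

lemma xW_le : ∀ a ∈ xWeyl K, a ∈ NN K := fun a h => Submodule.mem_sup_left h

lemma xWeyl_mul {a : WeylAlgebra K} (h : a ∈ xWeyl K) (b : WeylAlgebra K) :
    a * b ∈ xWeyl K := by
  have : a * b = op b • a := rfl
  rw [this]; exact Submodule.smul_mem _ _ h

lemma NN_mul_x {q : WeylAlgebra K} (h : q ∈ NN K) : q * wX K ∈ NN K := by
  obtain ⟨a, ha, b, hb, rfl⟩ := Submodule.mem_sup.mp h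
  rw [add_mul]
  refine Submodule.add_mem _ (xW_le _ (xWeyl_mul ha _)) ?_
  clear h ha a
  induction hb using Submodule.span_induction with
  | mem v hv =>
    obtain ⟨l, rfl⟩ := hv
    rw [dpow_x]
    exact Submodule.add_mem _ (xW_le _ (x_mul_mem _)) (Submodule.smul_mem _ _ (dpow_mem _))
  | zero => simp [Submodule.zero_mem]
  | add u v _ _ hu hv => rw [add_mul]; exact Submodule.add_mem _ hu hv
  | smul k u _ hu => rw [smul_mul_assoc]; exact Submodule.smul_mem _ _ hu

lemma NN_mul_d {q : WeylAlgebra K} (h : q ∈ NN K) : q * wD K ∈ NN K := by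
  obtain ⟨a, ha, b, hb, rfl⟩ := Submodule.mem_sup.mp h
  rw [add_mul]
  refine Submodule.add_mem _ (xW_le _ (xWeyl_mul ha _)) ?_
  clear h ha a
  induction hb using Submodule.span_induction with
  | mem v hv =>
    obtain ⟨l, rfl⟩ := hv
    rw [← pow_succ]
    exact dpow_mem _
  | zero => simp [Submodule.zero_mem]
  | add u v _ _ hu hv => rw [add_mul]; exact Submodule.add_mem _ hu hv
  | smul k u _ hu => rw [smul_mul_assoc]; exact Submodule.smul_mem _ _ hu

lemma NN_top (P : WeylAlgebra K) : P ∈ NN K := by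
  obtain ⟨f, rfl⟩ := RingQuot.mkAlgHom_surjective K (WeylRel K) P
  have key : ∀ q ∈ NN K, q * RingQuot.mkAlgHom K (WeylRel K) f ∈ NN K := by
    induction f using FreeAlgebra.induction with
    | grade0 r =>
      intro q hq
      rw [AlgHom.commutes, ← Algebra.commutes, ← Algebra.smul_def]
      exact Submodule.smul_mem _ _ hq
    | grade1 b =>
      intro q hq
      cases b
      · exact NN_mul_x hq
      · exact NN_mul_d hq
    | mul a b iha ihb =>
      intro q hq
      rw [map_mul, ← mul_assoc]
      exact ihb _ (iha _ hq)
    | add a b iha ihb =>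
      intro q hq
      rw [map_add, mul_add]
      exact Submodule.add_mem _ (iha _ hq) (ihb _ hq)
  simpa using key 1 (by simpa using dpow_mem 0)

lemma coeff_finsupp_sum (cf : ℕ →₀ K) (k : ℕ) :
    (cf.sum fun l a => a • (Polynomial.X : K[X]) ^ l).coeff k = cf k := by
  rw [Finsupp.sum, Polynomial.finset_sum_coeff]
  rw [Finset.sum_eq_single k]
  · simp
  · intro b _ hbk
    simp only [Polynomial.coeff_smul, Polynomial.coeff_X_pow, smul_eq_mul]
    rw [if_neg (Ne.symm hbk), mul_zero]
  · intro h
    simp [Finsupp.notMem_support_iff.mp h]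

lemma phi_eq_zero_mem {P : WeylAlgebra K} (h : phi P = 0) : P ∈ xWeyl K := by
  obtain ⟨a, ha, b, hb, rfl⟩ := Submodule.mem_sup.mp (NN_top P)
  obtain ⟨cf, rfl⟩ := Finsupp.mem_span_range_iff_exists_finsupp.mp hb
  have hpa : phi a = 0 := phi_xWeyl ha
  have hpb : phi (cf.sum fun l r => r • wD K ^ l) = cf.sum fun l r => r • (Polynomial.X : K[X]) ^ l := by
    rw [Finsupp.sum, Finsupp.sum, map_sum]
    refine Finset.sum_congr rfl fun l _ => ?_
    rw [map_smul, phi_d_pow]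
  rw [map_add, hpa, zero_add, hpb] at h
  have hcf : cf = 0 := by
    ext k
    have := congrArg (fun p => Polynomial.coeff p k) h
    simpa [coeff_finsupp_sum] using this
  subst hcf
  simpa using ha

lemma phi_surj (p : K[X]) : ∃ P : WeylAlgebra K, phi P = p := by
  refine ⟨p.sum fun l a => a • wD K ^ l, ?_⟩
  rw [Polynomial.sum, map_sum]
  conv_rhs => rw [← Polynomial.sum_C_mul_X_pow_eq p]
  rw [Polynomial.sum]
  refine Finset.sum_congr rfl fun l _ => ?_
  rw [map_smul, phi_d_pow, Polynomial.smul_eq_C_mul]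

lemma theta_pow (l : ℕ) :
    Polynomial.X * derivative ((Polynomial.X : K[X]) ^ l) = (l : K) • Polynomial.X ^ l := by
  cases l with
  | zero => simp
  | succ k =>
    rw [Polynomial.derivative_X_pow]
    simp only [Nat.add_sub_cancel, Polynomial.smul_eq_C_mul]
    push_cast
    ring

lemma phi_mul_factor (P : WeylAlgebra K) (γ : K) :
    phi (P * (wX K * wD K - algebraMap K (WeylAlgebra K) γ))
      = Polynomial.X * derivative (phi P) - γ • phi P := by
  rw [phi_mul, map_sub, map_mul, rho_x, rho_d, AlgHom.commutes]
  have h1 : (op (derivative : K[X] →ₗ[K] K[X]) * op Tm).unop = Tm * derivative := rfl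
  have h2 : (algebraMap K (Module.End K K[X])ᵐᵒᵖ γ).unop = algebraMap K (Module.End K K[X]) γ := rfl
  rw [unop_sub, h1, h2]
  simp [Tm, Module.End.mul_apply, LinearMap.mulLeft_apply, Module.algebraMap_end_apply]

lemma phi_mul_prod (γs : List K) (l : ℕ) (P : WeylAlgebra K) (k : K)
    (h : phi P = k • (Polynomial.X : K[X]) ^ l) :
    phi (P * (γs.map fun γ => wX K * wD K - algebraMap K (WeylAlgebra K) γ).prod)
      = ((γs.map fun γ => (l : K) - γ).prod * k) • (Polynomial.X : K[X]) ^ l := by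
  induction γs generalizing P k with
  | nil => simpa using h
  | cons γ γs ih =>
    rw [List.map_cons, List.prod_cons, ← mul_assoc]
    have hP' : phi (P * (wX K * wD K - algebraMap K (WeylAlgebra K) γ))
        = (((l : K) - γ) * k) • (Polynomial.X : K[X]) ^ l := by
      rw [phi_mul_factor, h, map_smul]
      rw [mul_smul_comm, theta_pow, smul_smul, smul_smul, ← sub_smul]
      congr 1
      ring
    rw [ih _ _ hP', List.map_cons, List.prod_cons]
    congr 1
    ring

lemma phi_dpow_hyp {m n : ℕ} (α : Fin m → K) (β : Fin n → K) (c : K) (l : ℕ) :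
    phi (wD K ^ l * hypOp (wX K) (wD K) α β c)
      = ((List.ofFn fun i => (l : K) - α i).prod) • (Polynomial.X : K[X]) ^ l
        - (c * ((l : K) * (List.ofFn fun j => ((l - 1 : ℕ) : K) - β j).prod))
            • (Polynomial.X : K[X]) ^ (l - 1) := by
  have hofn : ∀ (N : ℕ) (γ : Fin N → K),
      (List.ofFn fun i : Fin N => wX K * wD K - algebraMap K (WeylAlgebra K) (γ i))
        = (List.ofFn γ).map fun t => wX K * wD K - algebraMap K (WeylAlgebra K) t := by
    intro N γ; rw [List.map_ofFn]; rfl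
  rw [hypOp, mul_sub, map_sub]
  congr 1
  · rw [hofn, phi_mul_prod (List.ofFn α) l _ 1 (by rw [phi_d_pow, one_smul]), mul_one,
      List.map_ofFn]
    rfl
  · have h1 : algebraMap K (WeylAlgebra K) c * wX K
        * (List.ofFn fun j : Fin n => wX K * wD K - algebraMap K (WeylAlgebra K) (β j)).prod
        = c • (wX K * (List.ofFn fun j : Fin n =>
            wX K * wD K - algebraMap K (WeylAlgebra K) (β j)).prod) := by
      rw [mul_assoc, ← Algebra.smul_def]
    rw [h1, mul_smul_comm, map_smul, ← mul_assoc, dpow_x, add_mul, smul_mul_assoc, map_add,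
      mul_assoc, phi_x_mul, zero_add, map_smul, hofn,
      phi_mul_prod (List.ofFn β) (l - 1) _ 1 (by rw [phi_d_pow, one_smul]), mul_one,
      List.map_ofFn, smul_smul, smul_smul]
    rw [← mul_assoc]
    rfl

lemma H_X_pow {m n : ℕ} (α : Fin m → K) (β : Fin n → K) (c : K) (l : ℕ) :
    (rho (hypOp (wX K) (wD K) α β c)).unop ((Polynomial.X : K[X]) ^ l)
      = ((List.ofFn fun i => (l : K) - α i).prod) • (Polynomial.X : K[X]) ^ l
        - (c * ((l : K) * (List.ofFn fun j => ((l - 1 : ℕ) : K) - β j).prod))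
            • (Polynomial.X : K[X]) ^ (l - 1) := by
  have h := phi_mul (wD K ^ l) (hypOp (wX K) (wD K) α β c)
  rw [phi_d_pow] at h
  rw [← h, phi_dpow_hyp]

section Hsec

variable {m n : ℕ} (α : Fin m → K) (β : Fin n → K) (c : K)

noncomputable def Acoef (l : ℕ) : K := (List.ofFn fun i => (l : K) - α i).prod

noncomputable def Bcoef (l : ℕ) : K :=
  c * ((l : K) * (List.ofFn fun j => ((l - 1 : ℕ) : K) - β j).prod)

lemma Bcoef_zero : Bcoef β c 0 = 0 := by simp [Bcoef]

lemma Acoef_ne_zero (hα : ∀ i, ∀ z : ℤ, α i ≠ (z : K)) (l : ℕ) : Acoef α l ≠ 0 := by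
  refine List.prod_ne_zero fun hx => ?_
  obtain ⟨i, hi⟩ := List.mem_ofFn.mp hx
  refine hα i (l : ℤ) ?_
  rw [← sub_eq_zero.mp hi]; push_cast; ring

lemma H_X_pow' (l : ℕ) :
    (rho (hypOp (wX K) (wD K) α β c)).unop ((Polynomial.X : K[X]) ^ l)
      = Acoef α l • (Polynomial.X : K[X]) ^ l
        - Bcoef β c l • (Polynomial.X : K[X]) ^ (l - 1) := H_X_pow α β c l

lemma H_sum (p : K[X]) :
    (rho (hypOp (wX K) (wD K) α β c)).unop p
      = ∑ l ∈ p.support, p.coeff l • (rho (hypOp (wX K) (wD K) α β c)).unop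
          ((Polynomial.X : K[X]) ^ l) := by
  conv_lhs => rw [← Polynomial.sum_C_mul_X_pow_eq p]
  rw [Polynomial.sum, map_sum]
  exact Finset.sum_congr rfl fun l _ => by rw [← Polynomial.smul_eq_C_mul, map_smul]

lemma H_coeff (p : K[X]) (d : ℕ) (hp : p.natDegree ≤ d) :
    ((rho (hypOp (wX K) (wD K) α β c)).unop p).coeff d = Acoef α d * p.coeff d := by
  rw [H_sum, Polynomial.finset_sum_coeff]
  rw [Finset.sum_eq_single d]
  · rw [H_X_pow', Polynomial.coeff_smul]
    rw [Polynomial.coeff_sub, Polynomial.coeff_smul, Polynomial.coeff_smul,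
      Polynomial.coeff_X_pow, Polynomial.coeff_X_pow, if_pos rfl]
    cases d with
    | zero => simp [Bcoef, mul_comm]
    | succ e =>
      rw [if_neg (by omega), smul_eq_mul, smul_eq_mul, smul_eq_mul, mul_zero, sub_zero, mul_one,
        mul_comm]
  · intro b hb hbd
    have hble : b ≤ d := le_trans (Polynomial.le_natDegree_of_ne_zero
      (Polynomial.mem_support_iff.mp hb)) hp
    have hblt : b < d := lt_of_le_of_ne hble hbd
    rw [H_X_pow', Polynomial.coeff_smul, Polynomial.coeff_sub, Polynomial.coeff_smul,
      Polynomial.coeff_smul, Polynomial.coeff_X_pow, Polynomial.coeff_X_pow,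
      if_neg (by omega), if_neg (by omega)]
    simp
  · intro hd
    simp [Polynomial.notMem_support_iff.mp hd]

lemma H_natDegree_le (l : ℕ) :
    ((rho (hypOp (wX K) (wD K) α β c)).unop ((Polynomial.X : K[X]) ^ l)).natDegree ≤ l := by
  rw [H_X_pow']
  refine le_trans (Polynomial.natDegree_sub_le _ _) ?_
  simp only [max_le_iff]
  constructor
  · exact le_trans (Polynomial.natDegree_smul_le _ _) (by simp)
  · exact le_trans (Polynomial.natDegree_smul_le _ _) (by simp)

lemma H_injective (hα : ∀ i, ∀ z : ℤ, α i ≠ (z : K)) :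
    Function.Injective ((rho (hypOp (wX K) (wD K) α β c)).unop) := by
  refine (injective_iff_map_eq_zero _).mpr fun p hp => ?_
  by_contra hne
  have h := H_coeff α β c p p.natDegree le_rfl
  rw [hp, Polynomial.coeff_zero] at h
  have hA := Acoef_ne_zero α hα p.natDegree
  have h2 : p.coeff p.natDegree = 0 := by
    rcases mul_eq_zero.mp h.symm with h1 | h1
    · exact absurd h1 hA
    · exact h1
  exact hne (Polynomial.leadingCoeff_eq_zero.mp h2)

lemma H_surjective (hα : ∀ i, ∀ z : ℤ, α i ≠ (z : K)) :
    Function.Surjective ((rho (hypOp (wX K) (wD K) α β c)).unop) := by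
  have key : ∀ d : ℕ, ∀ q : K[X], q.natDegree ≤ d →
      ∃ p, (rho (hypOp (wX K) (wD K) α β c)).unop p = q := by
    intro d
    induction d with
    | zero =>
      intro q hq
      refine ⟨(q.coeff 0 / Acoef α 0) • 1, ?_⟩
      rw [map_smul]
      have h1 : (1 : K[X]) = Polynomial.X ^ 0 := by simp
      rw [h1, H_X_pow', Bcoef_zero, zero_smul, sub_zero, smul_smul,
        div_mul_cancel₀ _ (Acoef_ne_zero α hα 0)]
      conv_rhs => rw [Polynomial.eq_C_of_natDegree_le_zero hq]
      rw [pow_zero, Polynomial.smul_eq_C_mul, mul_one]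
    | succ d ih =>
      intro q hq
      set t := q.coeff (d + 1) / Acoef α (d + 1) with ht
      set r := (rho (hypOp (wX K) (wD K) α β c)).unop (t • Polynomial.X ^ (d + 1)) with hr
      have hrd : r.natDegree ≤ d + 1 := by
        rw [hr, map_smul]
        exact le_trans (Polynomial.natDegree_smul_le _ _) (H_natDegree_le α β c (d + 1))
      have hq' : (q - r).natDegree ≤ d := by
        rw [Polynomial.natDegree_le_iff_coeff_eq_zero]
        intro N hN
        rw [Polynomial.coeff_sub]
        rcases eq_or_lt_of_le (Nat.succ_le_of_lt hN) with hNe | hNlt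
        · rw [← hNe]
          rw [hr, H_coeff α β c _ (d+1) (le_trans (Polynomial.natDegree_smul_le _ _) (by simp)),
            Polynomial.coeff_smul, Polynomial.coeff_X_pow, if_pos rfl, smul_eq_mul, mul_one, ht,
            mul_div_cancel₀ _ (Acoef_ne_zero α hα (d+1)), sub_self]
        · rw [Polynomial.coeff_eq_zero_of_natDegree_lt (lt_of_le_of_lt hq hNlt),
            Polynomial.coeff_eq_zero_of_natDegree_lt (lt_of_le_of_lt hrd hNlt), sub_self]
      obtain ⟨p', hp'⟩ := ih (q - r) hq'
      exact ⟨p' + t • Polynomial.X ^ (d + 1), by rw [map_add, hp', ← hr]; ring⟩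
  intro q
  exact key q.natDegree q le_rfl

end Hsec

end WeylAux

open Polynomial MulOpposite in
/-- [Katz, ESDE 2.9.4]: if no `αᵢ` is an integer and no `αᵢ - βⱼ` is an integer
(and `c ≠ 0`), then right multiplication by `Hyp = ∏ᵢ(x∂-αᵢ) - c·x·∏ⱼ(x∂-βⱼ)` is
bijective on the quotient `A₁(K)/x·A₁(K)`. -/
theorem rightMul_hyp_bijective_on_quotient {K : Type*} [Field K] [CharZero K]
    {m n : ℕ} (α : Fin m → K) (β : Fin n → K) (c : K) (hc : c ≠ 0)
    (hα : ∀ i, ∀ z : ℤ, α i ≠ (z : K))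
    (hαβ : ∀ i j, ∀ z : ℤ, α i - β j ≠ (z : K)) :
    Function.Bijective
      (fun P : WeylAlgebra K ⧸ xWeyl K =>
        (MulOpposite.op (hypOp (wX K) (wD K) α β c)) • P) := by
  set Hy := hypOp (wX K) (wD K) α β c with hHy
  have hmk : ∀ a : WeylAlgebra K,
      (op Hy) • (Submodule.Quotient.mk (p := xWeyl K) a)
        = Submodule.Quotient.mk (p := xWeyl K) (a * Hy) := by
    intro a
    rw [← Submodule.Quotient.mk_smul, op_smul_eq_mul]
  have hphiHy : ∀ a : WeylAlgebra K, phi (a * Hy) = (rho Hy).unop (phi a) := fun a => phi_mul a Hy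
  constructor
  · intro pq qq h
    obtain ⟨a, rfl⟩ := Submodule.Quotient.mk_surjective _ pq
    obtain ⟨b, rfl⟩ := Submodule.Quotient.mk_surjective _ qq
    simp only [hmk] at h
    have hmem : a * Hy - b * Hy ∈ xWeyl K := (Submodule.Quotient.eq _).mp h
    have h0 : phi (a * Hy - b * Hy) = 0 := phi_xWeyl hmem
    rw [map_sub, hphiHy, hphiHy, sub_eq_zero] at h0
    have hab : phi a = phi b := H_injective α β c hα h0
    have : phi (a - b) = 0 := by rw [map_sub, hab, sub_self]
    exact (Submodule.Quotient.eq _).mpr (phi_eq_zero_mem this)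
  · intro qq
    obtain ⟨b, rfl⟩ := Submodule.Quotient.mk_surjective _ qq
    obtain ⟨p, hp⟩ := H_surjective α β c hα (phi b)
    obtain ⟨a, ha⟩ := phi_surj p
    refine ⟨Submodule.Quotient.mk a, ?_⟩
    simp only [hmk]
    refine (Submodule.Quotient.eq _).mpr (phi_eq_zero_mem ?_)
    rw [map_sub, hphiHy, ha, hp, sub_self]
end
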